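/- Let R be symmetric positive definite, μ̂ ∈ ℝ^N, β_i ≥ 0, Ψ(w) = wᵀRw − wᵀμ̂ + Σ_i β_i|w_i|, and let w* minimize Ψ. Let I ⊆ {1,…,N} and suppose w̃ minimizes the restricted problem min{ wᵀR_{|I}w − wᵀμ̂_{|I} + Σ_{i∈I} β_i|w_i| } over ℝ^I. Let w be the zero-extension of w̃ to ℝ^N. If |(2Rw)_i − μ̂_i| ≤ β_i for all i ∉ I, then w = w*, i.e., w minimizes Ψ on ℝ^N. -/

import Mathlib

open Matrix BigOperators

/-- If `w̃` solves the problem restricted to the index set `I`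
(i.e. it minimizes `Ψ` among vectors supported in `I`), its zero-extension `w`
satisfies `|(2Rw)_i − μ̂_i| ≤ β_i` for `i ∉ I`, and `w*` is the minimizer of
`Ψ`, then `w = w*`, i.e. `w` minimizes `Ψ` on all of `ℝ^N`. -/
theorem stmt11 (N : ℕ) (R : Matrix (Fin N) (Fin N) ℝ) (μ β : Fin N → ℝ)
    (hR : R.PosDef) (hβ : ∀ i, 0 ≤ β i)
    (Ψ : (Fin N → ℝ) → ℝ)
    (hΨ : ∀ w, Ψ w = w ⬝ᵥ (R *ᵥ w) - w ⬝ᵥ μ + ∑ i, β i * |w i|)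
    (I : Set (Fin N)) (w wstar : Fin N → ℝ)
    (hsupp : ∀ i ∉ I, w i = 0)
    (hmin : ∀ v : Fin N → ℝ, (∀ i ∉ I, v i = 0) → Ψ w ≤ Ψ v)
    (hout : ∀ i ∉ I, |2 * (R *ᵥ w) i - μ i| ≤ β i)
    (hstar : ∀ v, Ψ wstar ≤ Ψ v) :
    w = wstar ∧ ∀ v, Ψ w ≤ Ψ v := by
  -- entrywise symmetry
  have hRs : ∀ i j, R i j = R j i := by
    intro i j
    have := congrFun (congrFun hR.1 j) i
    simpa using this
  -- dot product symmetry
  have hsym : ∀ a b : Fin N → ℝ, a ⬝ᵥ (R *ᵥ b) = b ⬝ᵥ (R *ᵥ a) := by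
    intro a b
    simp only [dotProduct, mulVec, Finset.mul_sum]
    rw [Finset.sum_comm]
    refine Finset.sum_congr rfl fun i _ => Finset.sum_congr rfl fun j _ => ?_
    rw [hRs j i]; ring
  -- quadratic nonneg / pos
  have hq0 : ∀ u : Fin N → ℝ, 0 ≤ u ⬝ᵥ (R *ᵥ u) := by
    intro u
    have := hR.posSemidef.dotProduct_mulVec_nonneg u
    simpa using this
  have hqpos : ∀ u : Fin N → ℝ, u ≠ 0 → 0 < u ⬝ᵥ (R *ᵥ u) := by
    intro u hu
    have := hR.dotProduct_mulVec_pos hu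
    simpa using this
  set g : Fin N → ℝ := fun i => 2 * (R *ᵥ w) i - μ i with hg
  -- expansion
  have expand : ∀ v : Fin N → ℝ, Ψ v = Ψ w + (v - w) ⬝ᵥ (R *ᵥ (v - w)) +
      ∑ i, (g i * (v i - w i) + β i * (|v i| - |w i|)) := by
    intro v
    have h1 : v ⬝ᵥ (R *ᵥ v) = w ⬝ᵥ (R *ᵥ w) + (v - w) ⬝ᵥ (R *ᵥ (v - w))
        + 2 * (w ⬝ᵥ (R *ᵥ (v - w))) := by
      have hv : v = w + (v - w) := by ring
      calc v ⬝ᵥ (R *ᵥ v) = (w + (v - w)) ⬝ᵥ (R *ᵥ (w + (v - w))) := by rw [← hv]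
        _ = w ⬝ᵥ (R *ᵥ w) + w ⬝ᵥ (R *ᵥ (v - w)) + ((v - w) ⬝ᵥ (R *ᵥ w)
              + (v - w) ⬝ᵥ (R *ᵥ (v - w))) := by
            rw [mulVec_add, add_dotProduct, dotProduct_add, dotProduct_add]
        _ = _ := by rw [hsym (v - w) w]; ring
    have h2 : ∑ i, (g i * (v i - w i) + β i * (|v i| - |w i|))
        = 2 * (w ⬝ᵥ (R *ᵥ (v - w))) - (v ⬝ᵥ μ - w ⬝ᵥ μ)
          + (∑ i, β i * |v i| - ∑ i, β i * |w i|) := by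
      have h3 : (R *ᵥ w) ⬝ᵥ (v - w) = w ⬝ᵥ (R *ᵥ (v - w)) := by
        rw [dotProduct_comm, hsym]
      rw [Finset.sum_add_distrib]
      congr 1
      · rw [← h3]
        simp only [hg, dotProduct, sub_dotProduct, Pi.sub_apply]
        rw [Finset.mul_sum,
          ← Finset.sum_sub_distrib (f := fun i => v i * μ i) (g := fun i => w i * μ i),
          ← Finset.sum_sub_distrib (f := fun i => 2 * ((R *ᵥ w) i * (v i - w i)))
            (g := fun i => v i * μ i - w i * μ i)]
        refine Finset.sum_congr rfl fun i _ => ?_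
        ring
      · simp only [mul_sub, Finset.sum_sub_distrib]
    rw [hΨ v, hΨ w, h1, h2]
    ring
  -- diagonal entries positive
  have hdiag : ∀ i, 0 < R i i := by
    intro i
    have h := hqpos (Pi.single i 1) (by
      intro h; have := congrFun h i; simp at this)
    have : (Pi.single i 1 : Fin N → ℝ) ⬝ᵥ (R *ᵥ Pi.single i 1) = R i i := by
      simp [dotProduct, mulVec, Pi.single_apply, Finset.mul_sum]
    rwa [this] at h
  -- per-coordinate optimality on I
  have key : ∀ i ∈ I, ∀ x : ℝ, 0 ≤ g i * (x - w i) + β i * (|x| - |w i|) := by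
    intro i hi x
    by_contra hneg
    push_neg at hneg
    set δ := g i * (x - w i) + β i * (|x| - |w i|) with hδ
    have hxw : x ≠ w i := by
      intro h; rw [h] at hδ; simp [hδ] at hneg
    set c := (x - w i) ^ 2 * R i i with hc
    have hcpos : 0 < c := by
      exact mul_pos (pow_two_pos_of_ne_zero (sub_ne_zero.mpr hxw)) (hdiag i)
    set t := min 1 (-δ / (2 * c)) with ht
    have ht0 : 0 < t := lt_min one_pos (div_pos (by linarith) (by linarith))
    have ht1 : t ≤ 1 := min_le_left _ _
    have htc : t * c ≤ -δ / 2 := by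
      have : t ≤ -δ / (2 * c) := min_le_right _ _
      calc t * c ≤ (-δ / (2 * c)) * c := by nlinarith
        _ = -δ / 2 := by field_simp
    set v : Fin N → ℝ := fun j => if j = i then w i + t * (x - w i) else w j with hv
    have hvs : ∀ j ∉ I, v j = 0 := by
      intro j hj
      have hji : j ≠ i := fun h => hj (h ▸ hi)
      simp [hv, hji, hsupp j hj]
    have hle := hmin v hvs
    rw [expand v] at hle
    have hquad : (v - w) ⬝ᵥ (R *ᵥ (v - w)) = t ^ 2 * c := by
      have huv : v - w = Pi.single i (t * (x - w i)) := by
        ext j; by_cases h : j = i <;> simp [hv, h, Pi.single_apply]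
      rw [huv]
      simp [dotProduct, mulVec, Pi.single_apply, Finset.mul_sum, hc]
      ring
    have hsum : ∑ j, (g j * (v j - w j) + β j * (|v j| - |w j|)) ≤ t * δ := by
      rw [Finset.sum_eq_single i]
      · have hvi : v i = (1 - t) * w i + t * x := by simp [hv]; ring
        have habs : |v i| ≤ (1 - t) * |w i| + t * |x| := by
          rw [hvi]
          calc |(1 - t) * w i + t * x| ≤ |(1 - t) * w i| + |t * x| := abs_add_le _ _
            _ = (1 - t) * |w i| + t * |x| := by
                rw [abs_mul, abs_mul, abs_of_nonneg (by linarith), abs_of_nonneg ht0.le]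
        have hvw : v i - w i = t * (x - w i) := by simp [hv]
        have : β i * (|v i| - |w i|) ≤ t * (β i * (|x| - |w i|)) := by
          have := hβ i
          nlinarith
        rw [hvw, hδ]
        nlinarith
      · intro j _ hj
        simp [hv, hj]
      · simp
    have : 0 < t ^ 2 * c + t * δ := by nlinarith
    nlinarith [hq0 (v - w)]
  -- per-coordinate nonneg for all coordinates
  have hterm : ∀ v : Fin N → ℝ, ∀ i, 0 ≤ g i * (v i - w i) + β i * (|v i| - |w i|) := by
    intro v i
    by_cases hi : i ∈ I
    · exact key i hi (v i)
    · have hw0 : w i = 0 := hsupp i hi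
      have hgb : |g i| ≤ β i := hout i hi
      rw [hw0]
      simp only [sub_zero, abs_zero]
      have h1 : -(|g i| * |v i|) ≤ g i * v i := by
        rw [← abs_mul]; exact neg_abs_le _
      nlinarith [abs_nonneg (v i)]
  have hglobal : ∀ v, Ψ w ≤ Ψ v := by
    intro v
    rw [expand v]
    have h1 := hq0 (v - w)
    have h2 : 0 ≤ ∑ i, (g i * (v i - w i) + β i * (|v i| - |w i|)) :=
      Finset.sum_nonneg fun i _ => hterm v i
    linarith
  refine ⟨?_, hglobal⟩
  by_contra hne
  have hueq : Ψ wstar = Ψ w := le_antisymm (hstar w) (hglobal wstar)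
  have hune : wstar - w ≠ 0 := sub_ne_zero.mpr (fun h => hne (h.symm))
  have hq := hqpos (wstar - w) hune
  have h2 : 0 ≤ ∑ i, (g i * (wstar i - w i) + β i * (|wstar i| - |w i|)) :=
    Finset.sum_nonneg fun i _ => hterm wstar i
  have := expand wstar
  rw [hueq] at this
  linarith
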